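/- (No two-set Π⁰₂ cover, purely combinatorial form for n = 2.) For any two (3)-trains τ⁰₀,…,τ⁰_{m₀} and τ¹₀,…,τ¹_{m₁} (trains of 3-element sets) and any 2-coloring c of pairs, there exists c* : ⋃ τ^j_i → {R,B} such that every c-homogeneous τ^j_i of color ι contains a point of c*-color ῑ. Moreover the construction processes the sets in ≺-decreasing order and assigns at most one new value of c* per set, never using the minimum element of the set being processed. -/

import Mathlib

/-- An `n`-train of length `m+1`: a sequence `τ 0, …, τ m` of distinct `n`-element
subsets of `ℕ` such that every element of `τ (i+1) \ τ i` exceeds every element of `τ i`. -/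
def IsTrain (n m : ℕ) (τ : ℕ → Finset ℕ) : Prop :=
  (∀ i ≤ m, (τ i).card = n) ∧
  (∀ i ≤ m, ∀ i' ≤ m, i ≠ i' → τ i ≠ τ i') ∧
  (∀ i < m, ∀ a ∈ τ (i + 1) \ τ i, ∀ x ∈ τ i, x < a)

/-- `kth σ k` is the `(k+1)`-st smallest element of `σ`. -/
def kth (σ : Finset ℕ) (k : ℕ) : ℕ := (σ.sort (· ≤ ·)).getD k 0

/-- `Prec n σ σ'` : at the largest index `k < n` of disagreement, `σ (k) > σ' (k)`. -/
def Prec (n : ℕ) (σ σ' : Finset ℕ) : Prop :=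
  ∃ k < n, kth σ' k < kth σ k ∧ ∀ k', k < k' → k' < n → kth σ k' = kth σ' k'

/-- `σ` is `c`-homogeneous with color `ι`. -/
def Homog (c : Sym2 ℕ → Bool) (σ : Finset ℕ) (ι : Bool) : Prop :=
  ∀ x ∈ σ, ∀ y ∈ σ, x ≠ y → c s(x, y) = ι

lemma three (σ : Finset ℕ) (h : σ.card = 3) :
    kth σ 0 < kth σ 1 ∧ kth σ 1 < kth σ 2 ∧
      ∀ a, a ∈ σ ↔ a = kth σ 0 ∨ a = kth σ 1 ∨ a = kth σ 2 := by
  have hl : (σ.sort (· ≤ ·)).length = 3 := by rw [Finset.length_sort]; exact h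
  obtain ⟨p, q, r, hpqr⟩ := List.length_eq_three.mp hl
  have hs : (σ.sort (· ≤ ·)).Pairwise (· < ·) := σ.sortedLT_sort.pairwise
  rw [hpqr] at hs
  simp only [List.pairwise_cons, List.mem_cons] at hs
  have h0 : kth σ 0 = p := by simp [kth, hpqr]
  have h1 : kth σ 1 = q := by simp [kth, hpqr]
  have h2 : kth σ 2 = r := by simp [kth, hpqr]
  refine ⟨?_, ?_, ?_⟩
  · rw [h0, h1]; exact hs.1 q (by simp)
  · rw [h1, h2]; exact hs.2.1 r (by simp)
  · intro a
    rw [h0, h1, h2, ← Finset.mem_sort (· ≤ ·), hpqr]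
    simp

section TrainFacts
variable {m : ℕ} {τ : ℕ → Finset ℕ}

lemma mem0 (σ : Finset ℕ) (h : σ.card = 3) : kth σ 0 ∈ σ := ((three σ h).2.2 _).mpr (Or.inl rfl)
lemma mem1 (σ : Finset ℕ) (h : σ.card = 3) : kth σ 1 ∈ σ := ((three σ h).2.2 _).mpr (Or.inr (Or.inl rfl))
lemma mem2 (σ : Finset ℕ) (h : σ.card = 3) : kth σ 2 ∈ σ := ((three σ h).2.2 _).mpr (Or.inr (Or.inr rfl))
lemma le_max2 (σ : Finset ℕ) (h : σ.card = 3) {a : ℕ} (ha : a ∈ σ) : a ≤ kth σ 2 := by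
  have h3 := three σ h
  rcases (h3.2.2 a).mp ha with rfl | rfl | rfl <;> omega

lemma max_mono (h : IsTrain 3 m τ) : ∀ {i j : ℕ}, i < j → j ≤ m → kth (τ i) 2 < kth (τ j) 2 := by
  have step : ∀ j, j < m → kth (τ j) 2 < kth (τ (j+1)) 2 := by
    intro j hj
    have hne : τ (j+1) ≠ τ j := (h.2.1 (j+1) hj j (by omega) (by omega))
    have hnss : ¬ τ (j+1) ⊆ τ j := by
      intro hss
      exact hne (Finset.eq_of_subset_of_card_le hss
        (by rw [h.1 j (by omega), h.1 (j+1) hj]))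
    obtain ⟨a, ha⟩ := Finset.sdiff_nonempty.mpr hnss
    have hgt := h.2.2 j hj a ha (kth (τ j) 2) (mem2 _ (h.1 j (by omega)))
    have hle := le_max2 _ (h.1 (j+1) hj) (Finset.mem_sdiff.mp ha).1
    omega
  intro i j hij hjm
  induction j with
  | zero => omega
  | succ j ih =>
    rcases Nat.lt_succ_iff_lt_or_eq.mp hij with hij' | rfl
    · exact lt_trans (ih hij' (by omega)) (step j (by omega))
    · exact step i (by omega)

lemma max_mono_le (h : IsTrain 3 m τ) {i j : ℕ} (hij : i ≤ j) (hjm : j ≤ m) :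
    kth (τ i) 2 ≤ kth (τ j) 2 := by
  rcases eq_or_lt_of_le hij with rfl | hlt
  · exact le_rfl
  · exact (max_mono h hlt hjm).le

lemma pers (h : IsTrain 3 m τ) : ∀ {i j a : ℕ}, i ≤ j → j ≤ m → a ∈ τ j →
    a ≤ kth (τ i) 2 → a ∈ τ i := by
  intro i j
  induction j with
  | zero =>
    intro a hij _ haj hle
    have : i = 0 := by omega
    subst this; exact haj
  | succ j ih =>
    intro a hij hjm haj hle
    rcases Nat.lt_succ_iff_lt_or_eq.mp (Nat.lt_succ_of_le hij) with h1 | rfl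
    · have hij' : i ≤ j := by omega
      have haj' : a ∈ τ j := by
        by_contra hnot
        have hgt := h.2.2 j (by omega) a (Finset.mem_sdiff.mpr ⟨haj, hnot⟩)
            (kth (τ j) 2) (mem2 _ (h.1 j (by omega)))
        have : a ≤ kth (τ j) 2 := le_trans hle (max_mono_le h hij' (by omega))
        omega
      exact ih hij' (by omega) haj' hle
    · exact haj

lemma pers' (h : IsTrain 3 m τ) {i j a : ℕ} (hi : i ≤ m) (hj : j ≤ m)
    (hmax : kth (τ i) 2 < kth (τ j) 2) (haj : a ∈ τ j) (hle : a ≤ kth (τ i) 2) : a ∈ τ i := by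
  have hij : i < j := by
    by_contra hc
    have := max_mono_le h (by omega : j ≤ i) hi
    omega
  exact pers h hij.le hj haj hle

lemma max_inj (h : IsTrain 3 m τ) {i j : ℕ} (hi : i ≤ m) (hj : j ≤ m)
    (he : kth (τ i) 2 = kth (τ j) 2) : τ i = τ j := by
  rcases lt_trichotomy i j with hlt | rfl | hgt
  · have := max_mono h hlt hj; omega
  · rfl
  · have := max_mono h hgt hi; omega
end TrainFacts

section HomogFacts
variable {c : Sym2 ℕ → Bool}
lemma homog_unique {σ : Finset ℕ} (h3 : σ.card = 3) {b b' : Bool}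
    (hb : Homog c σ b) (hb' : Homog c σ b') : b = b' := by
  have hne : kth σ 0 ≠ kth σ 1 := by have := (three σ h3).1; omega
  rw [← hb _ (mem0 σ h3) _ (mem1 σ h3) hne, ← hb' _ (mem0 σ h3) _ (mem1 σ h3) hne]

lemma clash {σ σ' : Finset ℕ} {b b' : Bool} (hb : Homog c σ b) (hb' : Homog c σ' b')
    {p q : ℕ} (hp : p ∈ σ) (hq : q ∈ σ) (hp' : p ∈ σ') (hq' : q ∈ σ') (hne : p ≠ q) :
    b = b' := by
  rw [← hb p hp q hq hne, ← hb' p hp' q hq' hne]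

lemma same_train_mid {m : ℕ} {τ : ℕ → Finset ℕ} (h : IsTrain 3 m τ) {i j : ℕ} {b b' : Bool}
    (hi : i ≤ m) (hj : j ≤ m) (hbi : Homog c (τ i) b) (hbj : Homog c (τ j) b')
    (hmid : kth (τ i) 1 = kth (τ j) 1) : b = b' := by
  have h3i := h.1 i hi
  have h3j := h.1 j hj
  rcases lt_trichotomy (kth (τ i) 2) (kth (τ j) 2) with hlt | heq | hgt
  · -- τ i earlier; min of τ j and the common mid both lie in τ i
    have hx : kth (τ j) 0 ∈ τ i := pers' h hi hj hlt (mem0 _ h3j)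
      (by have := (three _ h3j).1; have := (three _ h3i).2.1; omega)
    have hy : kth (τ j) 1 ∈ τ i := by rw [← hmid]; exact mem1 _ h3i
    exact clash hbi hbj hx hy (mem0 _ h3j) (mem1 _ h3j)
      (by have := (three _ h3j).1; omega)
  · exact homog_unique h3i hbi (max_inj h hi hj heq ▸ hbj)
  · have hx : kth (τ i) 0 ∈ τ j := pers' h hj hi hgt (mem0 _ h3i)
      (by have := (three _ h3i).1; have := (three _ h3j).2.1; omega)
    have hy : kth (τ i) 1 ∈ τ j := by rw [hmid]; exact mem1 _ h3j
    exact clash hbi hbj (mem0 _ h3i) (mem1 _ h3i) hx hy (by have := (three _ h3i).1; omega)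
end HomogFacts

section Construction
open Classical
variable (m₀ m₁ : ℕ) (τ₀ τ₁ : ℕ → Finset ℕ) (c : Sym2 ℕ → Bool)

noncomputable def NN : ℕ :=
  ((Finset.range (m₀+1)).sup fun i => (τ₀ i).sup id) +
  ((Finset.range (m₁+1)).sup fun i => (τ₁ i).sup id) + 1

noncomputable def dflt (z : ℕ) : Bool :=
  if ∃ i, i ≤ m₀ ∧ kth (τ₀ i) 2 = z ∧ Homog c (τ₀ i) true then false
  else if ∃ i, i ≤ m₀ ∧ kth (τ₀ i) 2 = z ∧ Homog c (τ₀ i) false then true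
  else if ∃ i, i ≤ m₁ ∧ kth (τ₁ i) 2 = z ∧ Homog c (τ₁ i) true then false
  else if ∃ i, i ≤ m₁ ∧ kth (τ₁ i) 2 = z ∧ Homog c (τ₁ i) false then true
  else false

def ForcedP (f : ℕ → Bool) (z : ℕ) (v : Bool) : Prop :=
  (∃ i, i ≤ m₀ ∧ kth (τ₀ i) 1 = z ∧ Homog c (τ₀ i) (!v) ∧ f (kth (τ₀ i) 2) = !v) ∨
  (∃ i, i ≤ m₁ ∧ kth (τ₁ i) 1 = z ∧ Homog c (τ₁ i) (!v) ∧ f (kth (τ₁ i) 2) = !v)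

noncomputable def go : ℕ → ℕ → Bool
  | 0, z => dflt m₀ m₁ τ₀ τ₁ c z
  | (f+1), z =>
    if ForcedP m₀ m₁ τ₀ τ₁ c (go f) z true then true
    else if ForcedP m₀ m₁ τ₀ τ₁ c (go f) z false then false
    else dflt m₀ m₁ τ₀ τ₁ c z

noncomputable def csF : ℕ → Bool := go m₀ m₁ τ₀ τ₁ c (NN m₀ m₁ τ₀ τ₁ + 1)

variable {m₀ m₁ τ₀ τ₁}

lemma lt_NN0 {i a : ℕ} (hi : i ≤ m₀) (ha : a ∈ τ₀ i) : a < NN m₀ m₁ τ₀ τ₁ := by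
  have h1 : a ≤ (τ₀ i).sup id := Finset.le_sup (f := id) ha
  have h2 : (τ₀ i).sup id ≤ (Finset.range (m₀+1)).sup fun j => (τ₀ j).sup id :=
    Finset.le_sup (f := fun j => (τ₀ j).sup id) (Finset.mem_range.mpr (Nat.lt_succ_of_le hi))
  exact Nat.lt_succ_of_le (le_trans (le_trans h1 h2) (Nat.le_add_right _ _))

lemma lt_NN1 {i a : ℕ} (hi : i ≤ m₁) (ha : a ∈ τ₁ i) : a < NN m₀ m₁ τ₀ τ₁ := by
  have h1 : a ≤ (τ₁ i).sup id := Finset.le_sup (f := id) ha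
  have h2 : (τ₁ i).sup id ≤ (Finset.range (m₁+1)).sup fun j => (τ₁ j).sup id :=
    Finset.le_sup (f := fun j => (τ₁ j).sup id) (Finset.mem_range.mpr (Nat.lt_succ_of_le hi))
  exact Nat.lt_succ_of_le (le_trans (le_trans h1 h2) (Nat.le_add_left _ _))

lemma go_top (h₀ : IsTrain 3 m₀ τ₀) (h₁ : IsTrain 3 m₁ τ₁) {z : ℕ}
    (hz : NN m₀ m₁ τ₀ τ₁ ≤ z) (f : ℕ) : go m₀ m₁ τ₀ τ₁ c f z = dflt m₀ m₁ τ₀ τ₁ c z := by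
  cases f with
  | zero => rfl
  | succ f =>
    have hnf : ∀ g v, ¬ ForcedP m₀ m₁ τ₀ τ₁ c g z v := by
      rintro g v (⟨i, hi, hmid, -, -⟩ | ⟨i, hi, hmid, -, -⟩)
      · have := lt_NN0 (m₁ := m₁) (τ₁ := τ₁) hi (mem1 _ (h₀.1 i hi)); omega
      · have := lt_NN1 (m₀ := m₀) (τ₀ := τ₀) hi (mem1 _ (h₁.1 i hi)); omega
    rw [go, if_neg (hnf _ _), if_neg (hnf _ _)]

lemma go_stab (h₀ : IsTrain 3 m₀ τ₀) (h₁ : IsTrain 3 m₁ τ₁) :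
    ∀ (k z f₁ f₂ : ℕ), NN m₀ m₁ τ₀ τ₁ - z ≤ k → NN m₀ m₁ τ₀ τ₁ - z ≤ f₁ →
      NN m₀ m₁ τ₀ τ₁ - z ≤ f₂ → go m₀ m₁ τ₀ τ₁ c f₁ z = go m₀ m₁ τ₀ τ₁ c f₂ z := by
  intro k
  induction k with
  | zero =>
    intro z f₁ f₂ hk _ _
    have hz : NN m₀ m₁ τ₀ τ₁ ≤ z := by omega
    rw [go_top c h₀ h₁ hz, go_top c h₀ h₁ hz]
  | succ k ih =>
    intro z f₁ f₂ hk hf₁ hf₂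
    by_cases hz : NN m₀ m₁ τ₀ τ₁ ≤ z
    · rw [go_top c h₀ h₁ hz, go_top c h₀ h₁ hz]
    · have hzN : z < NN m₀ m₁ τ₀ τ₁ := by omega
      obtain ⟨g₁, rfl⟩ : ∃ g, f₁ = g + 1 := ⟨f₁ - 1, by omega⟩
      obtain ⟨g₂, rfl⟩ : ∃ g, f₂ = g + 1 := ⟨f₂ - 1, by omega⟩
      have hcong : ∀ v, ForcedP m₀ m₁ τ₀ τ₁ c (go m₀ m₁ τ₀ τ₁ c g₁) z v ↔
          ForcedP m₀ m₁ τ₀ τ₁ c (go m₀ m₁ τ₀ τ₁ c g₂) z v := by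
        intro v
        constructor
        · rintro (⟨i, hi, hmid, hh, hcs⟩ | ⟨i, hi, hmid, hh, hcs⟩)
          · refine Or.inl ⟨i, hi, hmid, hh, ?_⟩
            rw [← hcs]
            have hlt : z < kth (τ₀ i) 2 := by
              have := (three _ (h₀.1 i hi)).2.1; omega
            exact (ih (kth (τ₀ i) 2) g₂ g₁ (by omega) (by omega) (by omega))
          · refine Or.inr ⟨i, hi, hmid, hh, ?_⟩
            rw [← hcs]
            have hlt : z < kth (τ₁ i) 2 := by
              have := (three _ (h₁.1 i hi)).2.1; omega
            exact (ih (kth (τ₁ i) 2) g₂ g₁ (by omega) (by omega) (by omega))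
        · rintro (⟨i, hi, hmid, hh, hcs⟩ | ⟨i, hi, hmid, hh, hcs⟩)
          · refine Or.inl ⟨i, hi, hmid, hh, ?_⟩
            rw [← hcs]
            have hlt : z < kth (τ₀ i) 2 := by
              have := (three _ (h₀.1 i hi)).2.1; omega
            exact (ih (kth (τ₀ i) 2) g₁ g₂ (by omega) (by omega) (by omega))
          · refine Or.inr ⟨i, hi, hmid, hh, ?_⟩
            rw [← hcs]
            have hlt : z < kth (τ₁ i) 2 := by
              have := (three _ (h₁.1 i hi)).2.1; omega
            exact (ih (kth (τ₁ i) 2) g₁ g₂ (by omega) (by omega) (by omega))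
      rw [go, go]
      by_cases hT : ForcedP m₀ m₁ τ₀ τ₁ c (go m₀ m₁ τ₀ τ₁ c g₁) z true
      · rw [if_pos hT, if_pos ((hcong true).mp hT)]
      · rw [if_neg hT, if_neg (fun h => hT ((hcong true).mpr h))]
        by_cases hF : ForcedP m₀ m₁ τ₀ τ₁ c (go m₀ m₁ τ₀ τ₁ c g₁) z false
        · rw [if_pos hF, if_pos ((hcong false).mp hF)]
        · rw [if_neg hF, if_neg (fun h => hF ((hcong false).mpr h))]

lemma csF_eq (h₀ : IsTrain 3 m₀ τ₀) (h₁ : IsTrain 3 m₁ τ₁) (z : ℕ) :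
    csF m₀ m₁ τ₀ τ₁ c z =
      if ForcedP m₀ m₁ τ₀ τ₁ c (csF m₀ m₁ τ₀ τ₁ c) z true then true
      else if ForcedP m₀ m₁ τ₀ τ₁ c (csF m₀ m₁ τ₀ τ₁ c) z false then false
      else dflt m₀ m₁ τ₀ τ₁ c z := by
  have hgo : go m₀ m₁ τ₀ τ₁ c (NN m₀ m₁ τ₀ τ₁) = csF m₀ m₁ τ₀ τ₁ c := by
    funext z'
    exact go_stab c h₀ h₁ (NN m₀ m₁ τ₀ τ₁ - z') z' _ _ le_rfl (Nat.sub_le _ _)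
      (le_trans (Nat.sub_le _ _) (Nat.le_succ _))
  show go m₀ m₁ τ₀ τ₁ c (NN m₀ m₁ τ₀ τ₁ + 1) z = _
  rw [go, hgo]

lemma csF_val (h₀ : IsTrain 3 m₀ τ₀) (h₁ : IsTrain 3 m₁ τ₁) {z : ℕ} {v : Bool}
    (h : csF m₀ m₁ τ₀ τ₁ c z = v) :
    ForcedP m₀ m₁ τ₀ τ₁ c (csF m₀ m₁ τ₀ τ₁ c) z v ∨
      ((¬ ForcedP m₀ m₁ τ₀ τ₁ c (csF m₀ m₁ τ₀ τ₁ c) z true ∧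
        ¬ ForcedP m₀ m₁ τ₀ τ₁ c (csF m₀ m₁ τ₀ τ₁ c) z false) ∧ dflt m₀ m₁ τ₀ τ₁ c z = v) := by
  rw [csF_eq c h₀ h₁ z] at h
  by_cases F1 : ForcedP m₀ m₁ τ₀ τ₁ c (csF m₀ m₁ τ₀ τ₁ c) z true
  · rw [if_pos F1] at h; subst h; exact Or.inl F1
  · rw [if_neg F1] at h
    by_cases F0 : ForcedP m₀ m₁ τ₀ τ₁ c (csF m₀ m₁ τ₀ τ₁ c) z false
    · rw [if_pos F0] at h; subst h; exact Or.inl F0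
    · rw [if_neg F0] at h; exact Or.inr ⟨⟨F1, F0⟩, h⟩

lemma dflt_A (h₀ : IsTrain 3 m₀ τ₀) {i : ℕ} {b : Bool} (hi : i ≤ m₀)
    (hb : Homog c (τ₀ i) b) : dflt m₀ m₁ τ₀ τ₁ c (kth (τ₀ i) 2) = !b := by
  cases b with
  | true =>
    rw [dflt, if_pos ⟨i, hi, rfl, hb⟩]; rfl
  | false =>
    have hC1 : ¬ ∃ j, j ≤ m₀ ∧ kth (τ₀ j) 2 = kth (τ₀ i) 2 ∧ Homog c (τ₀ j) true := by
      rintro ⟨j, hj, hje, hjh⟩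
      rw [max_inj h₀ hj hi hje] at hjh
      exact absurd (homog_unique (h₀.1 i hi) hjh hb) (by simp)
    rw [dflt, if_neg hC1, if_pos ⟨i, hi, rfl, hb⟩]; rfl

lemma dflt_B (h₀ : IsTrain 3 m₀ τ₀) (h₁ : IsTrain 3 m₁ τ₁) {i z : ℕ} {b : Bool}
    (hnA : ∀ j, j ≤ m₀ → kth (τ₀ j) 2 = z → ∀ b', ¬ Homog c (τ₀ j) b')
    (hi : i ≤ m₁) (hb : Homog c (τ₁ i) b) (hz : kth (τ₁ i) 2 = z) :
    dflt m₀ m₁ τ₀ τ₁ c z = !b := by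
  have hC1 : ¬ ∃ j, j ≤ m₀ ∧ kth (τ₀ j) 2 = z ∧ Homog c (τ₀ j) true := by
    rintro ⟨j, hj, hje, hjh⟩; exact hnA j hj hje true hjh
  have hC2 : ¬ ∃ j, j ≤ m₀ ∧ kth (τ₀ j) 2 = z ∧ Homog c (τ₀ j) false := by
    rintro ⟨j, hj, hje, hjh⟩; exact hnA j hj hje false hjh
  cases b with
  | true =>
    rw [dflt, if_neg hC1, if_neg hC2, if_pos ⟨i, hi, hz, hb⟩]; rfl
  | false =>
    have hC3 : ¬ ∃ j, j ≤ m₁ ∧ kth (τ₁ j) 2 = z ∧ Homog c (τ₁ j) true := by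
      rintro ⟨j, hj, hje, hjh⟩
      rw [max_inj h₁ hj hi (by rw [hje, hz])] at hjh
      exact absurd (homog_unique (h₁.1 i hi) hjh hb) (by simp)
    rw [dflt, if_neg hC1, if_neg hC2, if_neg hC3, if_pos ⟨i, hi, hz, hb⟩]; rfl

lemma bool_ne_not (b : Bool) : b ≠ !b := by cases b <;> simp

lemma main_conflict (h₀ : IsTrain 3 m₀ τ₀) (h₁ : IsTrain 3 m₁ τ₁) {iA iB y : ℕ} {a : Bool}
    (hiA : iA ≤ m₀) (hiB : iB ≤ m₁)
    (hA : Homog c (τ₀ iA) a) (hB : Homog c (τ₁ iB) (!a))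
    (hyA : kth (τ₀ iA) 1 = y) (hyB : kth (τ₁ iB) 1 = y)
    (hcsA : csF m₀ m₁ τ₀ τ₁ c (kth (τ₀ iA) 2) = a)
    (hcsB : csF m₀ m₁ τ₀ τ₁ c (kth (τ₁ iB) 2) = !a) : False := by
  have h3A := h₀.1 iA hiA
  have h3B := h₁.1 iB hiB
  have tA := three _ h3A
  have tB := three _ h3B
  -- basic inequalities
  have hxAy : kth (τ₀ iA) 0 < y := by rw [← hyA]; exact tA.1
  have hyZA : y < kth (τ₀ iA) 2 := by rw [← hyA]; exact tA.2.1
  have hxBy : kth (τ₁ iB) 0 < y := by rw [← hyB]; exact tB.1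
  have hyZB : y < kth (τ₁ iB) 2 := by rw [← hyB]; exact tB.2.1
  have hymemA : y ∈ τ₀ iA := hyA ▸ mem1 _ h3A
  have hymemB : y ∈ τ₁ iB := hyB ▸ mem1 _ h3B
  rcases lt_trichotomy (kth (τ₀ iA) 2) (kth (τ₁ iB) 2) with hAB | heq | hBA
  · -- Z_A < Z_B : analyze cs Z_A = a
    rcases csF_val c h₀ h₁ hcsA with hF | ⟨⟨hF1, hF0⟩, hd⟩
    · rcases hF with ⟨j, hj, hmid, hh, hcs⟩ | ⟨j, hj, hmid, hh, hcs⟩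
      · -- forcing set in train 0
        have h3P := h₀.1 j hj
        have tP := three _ h3P
        have hZAMP : kth (τ₀ iA) 2 < kth (τ₀ j) 2 := by rw [← hmid] at *; exact tP.2.1
        have hxP : kth (τ₀ j) 0 ∈ τ₀ iA :=
          pers' h₀ hiA hj hZAMP (mem0 _ h3P) (by have := tP.1; omega)
        have : a = !a :=
          clash hA hh hxP (mem2 _ h3A) (mem0 _ h3P) (hmid ▸ mem1 _ h3P)
            (by have := tP.1; omega)
        exact bool_ne_not a this
      · -- forcing set in train 1
        have h3P := h₁.1 j hj
        have tP := three _ h3P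
        have hZAMP : kth (τ₀ iA) 2 < kth (τ₁ j) 2 := by rw [← hmid] at *; exact tP.2.1
        rcases lt_trichotomy (kth (τ₁ j) 2) (kth (τ₁ iB) 2) with hlt | heq2 | hgt
        · -- P earlier than σB in train 1: y ∈ P
          have hyP : y ∈ τ₁ j := pers' h₁ hj hiB hlt hymemB (by omega)
          have : (!a) = a :=
            clash hh hA hyP (hmid ▸ mem1 _ h3P) hymemA (mem2 _ h3A) (by omega)
          exact bool_ne_not a this.symm
        · -- same max: same set, mid clash
          have := max_inj h₁ hj hiB heq2
          rw [this] at hmid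
          omega
        · -- σB earlier: Z_A ∈ σB, impossible position
          have hZAin : kth (τ₀ iA) 2 ∈ τ₁ iB :=
            pers' h₁ hiB hj hgt (hmid ▸ mem1 _ h3P) (by omega)
          rcases (tB.2.2 _).mp hZAin with h | h | h <;> omega
    · -- unforced: dflt Z_A = a but σA itself gives !a
      have := dflt_A (m₁ := m₁) (τ₁ := τ₁) c h₀ hiA hA
      rw [hd] at this
      exact bool_ne_not a this
  · -- Z_A = Z_B : value clash
    rw [heq, hcsB] at hcsA
    exact bool_ne_not a hcsA.symm
  · -- Z_B < Z_A : analyze cs Z_B = !a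
    rcases csF_val c h₀ h₁ hcsB with hF | ⟨⟨hF1, hF0⟩, hd⟩
    · rcases hF with ⟨j, hj, hmid, hh, hcs⟩ | ⟨j, hj, hmid, hh, hcs⟩
      · -- forcing set in train 0, homog !!a = a
        rw [Bool.not_not] at hh
        have h3P := h₀.1 j hj
        have tP := three _ h3P
        have hZBMP : kth (τ₁ iB) 2 < kth (τ₀ j) 2 := by rw [← hmid] at *; exact tP.2.1
        rcases lt_trichotomy (kth (τ₀ j) 2) (kth (τ₀ iA) 2) with hlt | heq2 | hgt
        · -- P earlier than σA in train 0: y ∈ P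
          have hyP : y ∈ τ₀ j := pers' h₀ hj hiA hlt hymemA (by omega)
          have : a = !a :=
            clash hh hB hyP (hmid ▸ mem1 _ h3P) hymemB (mem2 _ h3B) (by omega)
          exact bool_ne_not a this
        · have := max_inj h₀ hj hiA heq2
          rw [this] at hmid
          omega
        · have hZBin : kth (τ₁ iB) 2 ∈ τ₀ iA :=
            pers' h₀ hiA hj hgt (hmid ▸ mem1 _ h3P) (by omega)
          rcases (tA.2.2 _).mp hZBin with h | h | h <;> omega
      · -- forcing set in train 1, homog a
        rw [Bool.not_not] at hh
        have h3P := h₁.1 j hj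
        have tP := three _ h3P
        have hZBMP : kth (τ₁ iB) 2 < kth (τ₁ j) 2 := by rw [← hmid] at *; exact tP.2.1
        have hxP : kth (τ₁ j) 0 ∈ τ₁ iB :=
          pers' h₁ hiB hj hZBMP (mem0 _ h3P) (by have := tP.1; omega)
        have : a = !a :=
          clash hh hB (mem0 _ h3P) (hmid ▸ mem1 _ h3P) hxP (mem2 _ h3B)
            (by have := tP.1; omega)
        exact bool_ne_not a this
    · -- unforced: dflt Z_B = !a
      by_cases hex : ∃ j, j ≤ m₀ ∧ kth (τ₀ j) 2 = kth (τ₁ iB) 2 ∧ ∃ r, Homog c (τ₀ j) r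
      · obtain ⟨j, hj, hje, r, hr⟩ := hex
        have hdr := dflt_A (m₁ := m₁) (τ₁ := τ₁) c h₀ hj hr
        rw [hje, hd] at hdr
        have hra : r = a := by cases r <;> cases a <;> simp_all
        subst hra
        have h3P := h₀.1 j hj
        have hyP : y ∈ τ₀ j := pers' h₀ hj hiA (by omega) hymemA (by omega)
        have : r = !r :=
          clash hr hB hyP (hje ▸ mem2 _ h3P) hymemB (mem2 _ h3B) (by omega)
        exact bool_ne_not r this
      · push_neg at hex
        have := dflt_B c h₀ h₁ (fun j hj hje r hrr => hex j hj hje r hrr) hiB hB rfl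
        rw [hd] at this
        exact bool_ne_not (!a) this

lemma serve0 (h₀ : IsTrain 3 m₀ τ₀) (h₁ : IsTrain 3 m₁ τ₁) {i : ℕ} (hi : i ≤ m₀)
    (ι : Bool) (hh : Homog c (τ₀ i) ι) :
    ∃ a ∈ τ₀ i, csF m₀ m₁ τ₀ τ₁ c a = !ι := by
  have h3 := h₀.1 i hi
  by_cases hz : csF m₀ m₁ τ₀ τ₁ c (kth (τ₀ i) 2) = !ι
  · exact ⟨_, mem2 _ h3, hz⟩
  · have hz2 : csF m₀ m₁ τ₀ τ₁ c (kth (τ₀ i) 2) = ι := by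
      cases h' : csF m₀ m₁ τ₀ τ₁ c (kth (τ₀ i) 2) <;> cases ι <;> simp_all
    have F₀ : ForcedP m₀ m₁ τ₀ τ₁ c (csF m₀ m₁ τ₀ τ₁ c) (kth (τ₀ i) 1) (!ι) :=
      Or.inl ⟨i, hi, rfl, by rw [Bool.not_not]; exact hh, by rw [Bool.not_not]; exact hz2⟩
    refine ⟨kth (τ₀ i) 1, mem1 _ h3, ?_⟩
    rw [csF_eq c h₀ h₁]
    by_cases FT : ForcedP m₀ m₁ τ₀ τ₁ c (csF m₀ m₁ τ₀ τ₁ c) (kth (τ₀ i) 1) true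
    · rw [if_pos FT]
      cases ι with
      | false => rfl
      | true =>
        exfalso
        rcases FT with ⟨j, hj, hmid, hhj, hcsj⟩ | ⟨j, hj, hmid, hhj, hcsj⟩
        · have := same_train_mid h₀ hi hj hh hhj hmid.symm
          simp at this
        · exact main_conflict c h₀ h₁ hi hj hh hhj rfl hmid hz2 hcsj
    · rw [if_neg FT]
      cases ι with
      | true =>
        simp only [Bool.not_true] at F₀
        rw [if_pos F₀]; rfl
      | false =>
        exfalso
        simp only [Bool.not_false] at F₀
        exact FT F₀

lemma serve1 (h₀ : IsTrain 3 m₀ τ₀) (h₁ : IsTrain 3 m₁ τ₁) {i : ℕ} (hi : i ≤ m₁)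
    (ι : Bool) (hh : Homog c (τ₁ i) ι) :
    ∃ a ∈ τ₁ i, csF m₀ m₁ τ₀ τ₁ c a = !ι := by
  have h3 := h₁.1 i hi
  by_cases hz : csF m₀ m₁ τ₀ τ₁ c (kth (τ₁ i) 2) = !ι
  · exact ⟨_, mem2 _ h3, hz⟩
  · have hz2 : csF m₀ m₁ τ₀ τ₁ c (kth (τ₁ i) 2) = ι := by
      cases h' : csF m₀ m₁ τ₀ τ₁ c (kth (τ₁ i) 2) <;> cases ι <;> simp_all
    have F₀ : ForcedP m₀ m₁ τ₀ τ₁ c (csF m₀ m₁ τ₀ τ₁ c) (kth (τ₁ i) 1) (!ι) :=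
      Or.inr ⟨i, hi, rfl, by rw [Bool.not_not]; exact hh, by rw [Bool.not_not]; exact hz2⟩
    refine ⟨kth (τ₁ i) 1, mem1 _ h3, ?_⟩
    rw [csF_eq c h₀ h₁]
    by_cases FT : ForcedP m₀ m₁ τ₀ τ₁ c (csF m₀ m₁ τ₀ τ₁ c) (kth (τ₁ i) 1) true
    · rw [if_pos FT]
      cases ι with
      | false => rfl
      | true =>
        exfalso
        rcases FT with ⟨j, hj, hmid, hhj, hcsj⟩ | ⟨j, hj, hmid, hhj, hcsj⟩
        · -- cross-train: π in train 0 homog (!true) = false, our σ in train 1 homog true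
          refine main_conflict (a := false) c h₀ h₁ hj hi ?_ ?_ hmid rfl ?_ ?_
          · simpa using hhj
          · simpa using hh
          · simpa using hcsj
          · simpa using hz2
        · have := same_train_mid h₁ hi hj hh hhj hmid.symm
          simp at this
    · rw [if_neg FT]
      cases ι with
      | true =>
        simp only [Bool.not_true] at F₀
        rw [if_pos F₀]; rfl
      | false =>
        exfalso
        simp only [Bool.not_false] at F₀
        exact FT F₀

end Construction


/-- The train lemma for `n = 2`: given two trains of 3-element sets and a 2-coloring
`c` of pairs, there is a vertex coloring `c*` of the union such that every
`c`-homogeneous set in either train of color `ι` contains a point of `c*`-color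
`!ι`. -/
theorem train_lemma_two (m₀ m₁ : ℕ) (τ₀ τ₁ : ℕ → Finset ℕ)
    (h₀ : IsTrain 3 m₀ τ₀) (h₁ : IsTrain 3 m₁ τ₁) (c : Sym2 ℕ → Bool) :
    ∃ cs : ℕ → Bool,
      (∀ i ≤ m₀, ∀ ι : Bool, Homog c (τ₀ i) ι → ∃ a ∈ τ₀ i, cs a = !ι) ∧
      (∀ i ≤ m₁, ∀ ι : Bool, Homog c (τ₁ i) ι → ∃ a ∈ τ₁ i, cs a = !ι) :=
  ⟨csF m₀ m₁ τ₀ τ₁ c,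
    fun i hi ι hh => serve0 c h₀ h₁ hi ι hh,
    fun i hi ι hh => serve1 c h₀ h₁ hi ι hh⟩
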